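/- Let p > 0, N ∈ ℕ with N ≥ 1, a < b real, h = (b−a)/N, with knots x_j = a + jh for j = −3,…,N+3. The exponential B-splines φ_{−1}, φ_0, …, φ_{N+1} are linearly independent as functions on [a,b]: if real coefficients δ_{−1}, …, δ_{N+1} satisfy Σ_{i=−1}^{N+1} δ_i φ_i(x) = 0 for all x ∈ [a,b], then δ_i = 0 for all i = −1, …, N+1. -/

import Mathlib

/-- The exponential B-spline `φ_i` with parameter `p`, mesh size `h` and knots
`x_j = x₀ + j·h`, defined piecewise on `[x_{i−2}, x_{i+2}]` and zero elsewhere. -/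
noncomputable def expBspline (p h x₀ : ℝ) (i : ℤ) : ℝ → ℝ := fun x =>
  let s := Real.sinh (p * h)
  let c := Real.cosh (p * h)
  let a₁ := p * h * c / (p * h * c - s)
  let b₁ := p / 2 * ((c * (c - 1) + s ^ 2) / ((p * h * c - s) * (1 - c)))
  let b₂ := p / (2 * (p * h * c - s))
  let c₁ := 1 / 4 * ((Real.exp (-(p * h)) * (1 - c) + s * (Real.exp (-(p * h)) - 1)) /
      ((p * h * c - s) * (1 - c)))
  let d₁ := 1 / 4 * ((Real.exp (p * h) * (c - 1) + s * (Real.exp (p * h) - 1)) /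
      ((p * h * c - s) * (1 - c)))
  let X : ℤ → ℝ := fun j => x₀ + (j : ℝ) * h
  if X (i - 2) ≤ x ∧ x ≤ X (i - 1) then
    b₂ * ((X (i - 2) - x) - Real.sinh (p * (X (i - 2) - x)) / p)
  else if X (i - 1) ≤ x ∧ x ≤ X i then
    a₁ + b₁ * (X i - x) + c₁ * Real.exp (p * (X i - x)) + d₁ * Real.exp (-(p * (X i - x)))
  else if X i ≤ x ∧ x ≤ X (i + 1) then
    a₁ + b₁ * (x - X i) + c₁ * Real.exp (p * (x - X i)) + d₁ * Real.exp (-(p * (x - X i)))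
  else if X (i + 1) ≤ x ∧ x ≤ X (i + 2) then
    b₂ * ((x - X (i + 2)) - Real.sinh (p * (x - X (i + 2))) / p)
  else 0


set_option maxHeartbeats 1600000

open Real in
lemma sinh_lt_mul_cosh {q : ℝ} (hq : 0 < q) : Real.sinh q < q * Real.cosh q := by
  have H : StrictMonoOn (fun x : ℝ => x * Real.cosh x - Real.sinh x) (Set.Ici 0) := by
    apply strictMonoOn_of_deriv_pos (convex_Ici 0)
    · fun_prop
    · intro x hx
      rw [interior_Ici, Set.mem_Ioi] at hx
      have hd : HasDerivAt (fun x : ℝ => x * Real.cosh x - Real.sinh x)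
          (x * Real.sinh x) x := by
        have := ((hasDerivAt_id x).mul (Real.hasDerivAt_cosh x)).sub (Real.hasDerivAt_sinh x)
        refine this.congr_deriv ?_
        simp only [id]; ring
      rw [hd.deriv]
      exact mul_pos hx (Real.sinh_pos_iff.mpr hx)
  have := H Set.self_mem_Ici (Set.mem_Ici.mpr hq.le) hq
  simp at this
  linarith


lemma deriv_transfer (f g : ℝ → ℝ) (hfg : ∀ x, HasDerivAt f (g x) x)
    {l u : ℝ} (hf : ∀ x ∈ Set.Ioo l u, f x = 0) : ∀ x ∈ Set.Ioo l u, g x = 0 := by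
  intro x hx
  have hev : f =ᶠ[nhds x] (fun _ => 0) :=
    Filter.eventuallyEq_of_mem (Ioo_mem_nhds hx.1 hx.2) hf
  have h1 : deriv f x = 0 := by
    rw [hev.deriv_eq]; simp
  rw [(hfg x).deriv] at h1
  exact h1

lemma indep4 {p A B C D l u : ℝ} (hp : p ≠ 0) (hlu : l < u)
    (hf : ∀ x ∈ Set.Ioo l u,
      A + B * x + C * Real.exp (p * x) + D * Real.exp (-(p * x)) = 0) :
    A = 0 ∧ B = 0 ∧ C = 0 ∧ D = 0 := by
  have hep : ∀ x : ℝ, HasDerivAt (fun y : ℝ => Real.exp (p * y)) (p * Real.exp (p * x)) x := by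
    intro x
    have := (Real.hasDerivAt_exp (p * x)).comp x ((hasDerivAt_id x).const_mul p)
    simpa [mul_comm, Function.comp_def] using this
  have hem : ∀ x : ℝ, HasDerivAt (fun y : ℝ => Real.exp (-(p * y)))
      (-p * Real.exp (-(p * x))) x := by
    intro x
    have := (Real.hasDerivAt_exp (-(p * x))).comp x (((hasDerivAt_id x).const_mul p).neg)
    simpa [mul_comm, Function.comp_def, Pi.neg_apply] using this
  set f0 : ℝ → ℝ := fun x => A + B * x + C * Real.exp (p * x) + D * Real.exp (-(p * x)) with hf0
  set f1 : ℝ → ℝ := fun x => B + C * p * Real.exp (p * x) - D * p * Real.exp (-(p * x)) with hf1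
  set f2 : ℝ → ℝ := fun x => C * p ^ 2 * Real.exp (p * x) + D * p ^ 2 * Real.exp (-(p * x)) with hf2
  set f3 : ℝ → ℝ := fun x => C * p ^ 3 * Real.exp (p * x) - D * p ^ 3 * Real.exp (-(p * x)) with hf3
  have d0 : ∀ x, HasDerivAt f0 (f1 x) x := by
    intro x
    have := (((hasDerivAt_const x A).add ((hasDerivAt_id x).const_mul B)).add
      ((hep x).const_mul C)).add ((hem x).const_mul D)
    refine this.congr_deriv ?_
    simp only [hf1]; ring
  have d1 : ∀ x, HasDerivAt f1 (f2 x) x := by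
    intro x
    have := ((hasDerivAt_const x B).add ((hep x).const_mul (C * p))).sub
      ((hem x).const_mul (D * p))
    refine this.congr_deriv ?_
    simp only [hf2]; ring
  have d2 : ∀ x, HasDerivAt f2 (f3 x) x := by
    intro x
    have := ((hep x).const_mul (C * p ^ 2)).add ((hem x).const_mul (D * p ^ 2))
    refine this.congr_deriv ?_
    simp only [hf3]; ring
  have h1 := deriv_transfer f0 f1 d0 hf
  have h2 := deriv_transfer f1 f2 d1 h1
  have h3 := deriv_transfer f2 f3 d2 h2
  set x₀ := (l + u) / 2 with hx₀
  have hx : x₀ ∈ Set.Ioo l u := by constructor <;> simp [hx₀] <;> linarith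
  have e0 := hf x₀ hx
  have e1 := h1 x₀ hx
  have e2 := h2 x₀ hx
  have e3 := h3 x₀ hx
  simp only [hf1, hf2, hf3] at e1 e2 e3
  have hepos : 0 < Real.exp (p * x₀) := Real.exp_pos _
  have hemos : 0 < Real.exp (-(p * x₀)) := Real.exp_pos _
  have hC : C = 0 := by
    have hc2 : C * (2 * p ^ 3 * Real.exp (p * x₀)) = 0 := by linear_combination p * e2 + e3
    have hne : 2 * p ^ 3 * Real.exp (p * x₀) ≠ 0 :=
      mul_ne_zero (mul_ne_zero two_ne_zero (pow_ne_zero _ hp)) (Real.exp_ne_zero _)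
    exact (mul_eq_zero.mp hc2).resolve_right hne
  have hD : D = 0 := by
    have hd2 : D * (p ^ 2 * Real.exp (-(p * x₀))) = 0 := by
      rw [hC] at e2; linear_combination e2
    have hne : p ^ 2 * Real.exp (-(p * x₀)) ≠ 0 :=
      mul_ne_zero (pow_ne_zero _ hp) (Real.exp_ne_zero _)
    exact (mul_eq_zero.mp hd2).resolve_right hne
  have hB : B = 0 := by rw [hC, hD] at e1; simpa using e1
  have hA : A = 0 := by rw [hB, hC, hD] at e0; simpa using e0
  exact ⟨hA, hB, hC, hD⟩

lemma expBspline_eq_zero {p h x₀ : ℝ} (hh : 0 < h) {i : ℤ} {x : ℝ}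
    (hx : x < x₀ + ((i : ℝ) - 2) * h ∨ x₀ + ((i : ℝ) + 2) * h < x) :
    expBspline p h x₀ i x = 0 := by
  unfold expBspline
  simp only []
  split_ifs with h1 h2 h3 h4
  · exfalso; obtain ⟨ha, hb⟩ := h1; push_cast at ha hb
    rcases hx with hx | hx <;> nlinarith
  · exfalso; obtain ⟨ha, hb⟩ := h2; push_cast at ha hb
    rcases hx with hx | hx <;> nlinarith
  · exfalso; obtain ⟨ha, hb⟩ := h3; push_cast at ha hb
    rcases hx with hx | hx <;> nlinarith
  · exfalso; obtain ⟨ha, hb⟩ := h4; push_cast at ha hb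
    rcases hx with hx | hx <;> nlinarith
  · rfl

lemma expBspline_eval1 {p h x₀ : ℝ} {i : ℤ} {x : ℝ}
    (hx1 : x₀ + ((i : ℝ) - 2) * h ≤ x) (hx2 : x ≤ x₀ + ((i : ℝ) - 1) * h) :
    expBspline p h x₀ i x =
      (p / (2 * (p * h * Real.cosh (p * h) - Real.sinh (p * h)))) *
        ((x₀ + ((i : ℝ) - 2) * h - x) - Real.sinh (p * (x₀ + ((i : ℝ) - 2) * h - x)) / p) := by
  unfold expBspline
  simp only []
  rw [if_pos ⟨by push_cast; linarith, by push_cast; linarith⟩]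
  try push_cast
  try ring_nf

lemma expBspline_eval2 {p h x₀ : ℝ} (hh : 0 < h) {i : ℤ} {x : ℝ}
    (hx1 : x₀ + ((i : ℝ) - 1) * h < x) (hx2 : x ≤ x₀ + (i : ℝ) * h) :
    expBspline p h x₀ i x =
      (p * h * Real.cosh (p * h) / (p * h * Real.cosh (p * h) - Real.sinh (p * h))) +
      (p / 2 * ((Real.cosh (p * h) * (Real.cosh (p * h) - 1) + Real.sinh (p * h) ^ 2) /
        ((p * h * Real.cosh (p * h) - Real.sinh (p * h)) * (1 - Real.cosh (p * h))))) *
          (x₀ + (i : ℝ) * h - x) +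
      (1 / 4 * ((Real.exp (-(p * h)) * (1 - Real.cosh (p * h)) +
          Real.sinh (p * h) * (Real.exp (-(p * h)) - 1)) /
        ((p * h * Real.cosh (p * h) - Real.sinh (p * h)) * (1 - Real.cosh (p * h))))) *
          Real.exp (p * (x₀ + (i : ℝ) * h - x)) +
      (1 / 4 * ((Real.exp (p * h) * (Real.cosh (p * h) - 1) +
          Real.sinh (p * h) * (Real.exp (p * h) - 1)) /
        ((p * h * Real.cosh (p * h) - Real.sinh (p * h)) * (1 - Real.cosh (p * h))))) *
          Real.exp (-(p * (x₀ + (i : ℝ) * h - x))) := by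
  unfold expBspline
  simp only []
  rw [if_neg (by push_cast; intro hc; rcases hc with ⟨_, hb⟩; linarith),
    if_pos ⟨by push_cast; linarith, by push_cast; linarith⟩]
  try push_cast
  try ring_nf

lemma expBspline_eval3 {p h x₀ : ℝ} (hh : 0 < h) {i : ℤ} {x : ℝ}
    (hx1 : x₀ + (i : ℝ) * h < x) (hx2 : x ≤ x₀ + ((i : ℝ) + 1) * h) :
    expBspline p h x₀ i x =
      (p * h * Real.cosh (p * h) / (p * h * Real.cosh (p * h) - Real.sinh (p * h))) +
      (p / 2 * ((Real.cosh (p * h) * (Real.cosh (p * h) - 1) + Real.sinh (p * h) ^ 2) /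
        ((p * h * Real.cosh (p * h) - Real.sinh (p * h)) * (1 - Real.cosh (p * h))))) *
          (x - (x₀ + (i : ℝ) * h)) +
      (1 / 4 * ((Real.exp (-(p * h)) * (1 - Real.cosh (p * h)) +
          Real.sinh (p * h) * (Real.exp (-(p * h)) - 1)) /
        ((p * h * Real.cosh (p * h) - Real.sinh (p * h)) * (1 - Real.cosh (p * h))))) *
          Real.exp (p * (x - (x₀ + (i : ℝ) * h))) +
      (1 / 4 * ((Real.exp (p * h) * (Real.cosh (p * h) - 1) +
          Real.sinh (p * h) * (Real.exp (p * h) - 1)) /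
        ((p * h * Real.cosh (p * h) - Real.sinh (p * h)) * (1 - Real.cosh (p * h))))) *
          Real.exp (-(p * (x - (x₀ + (i : ℝ) * h)))) := by
  unfold expBspline
  simp only []
  rw [if_neg (by push_cast; intro hc; rcases hc with ⟨_, hb⟩; linarith),
    if_neg (by push_cast; intro hc; rcases hc with ⟨_, hb⟩; linarith),
    if_pos ⟨by push_cast; linarith, by push_cast; linarith⟩]
  try push_cast
  try ring_nf

lemma expBspline_eval4 {p h x₀ : ℝ} (hh : 0 < h) {i : ℤ} {x : ℝ}
    (hx1 : x₀ + ((i : ℝ) + 1) * h < x) (hx2 : x ≤ x₀ + ((i : ℝ) + 2) * h) :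
    expBspline p h x₀ i x =
      (p / (2 * (p * h * Real.cosh (p * h) - Real.sinh (p * h)))) *
        ((x - (x₀ + ((i : ℝ) + 2) * h)) - Real.sinh (p * (x - (x₀ + ((i : ℝ) + 2) * h))) / p) := by
  unfold expBspline
  simp only []
  rw [if_neg (by push_cast; intro hc; rcases hc with ⟨_, hb⟩; linarith),
    if_neg (by push_cast; intro hc; rcases hc with ⟨_, hb⟩; linarith),
    if_neg (by push_cast; intro hc; rcases hc with ⟨_, hb⟩; linarith),
    if_pos ⟨by push_cast; linarith, by push_cast; linarith⟩]
  try push_cast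
  try ring_nf


lemma cancel_ne {a b : ℝ} (ha : a ≠ 0) (h : a * b = 0) : b = 0 :=
  (mul_eq_zero.mp h).resolve_left ha

lemma solve4 (p h E F s c a1 b1 b2 c1 d1 u v w z : ℝ)
    (hp : 0 < p) (hh : 0 < h) (hE : 1 < E) (hEF : E * F = 1)
    (hs : 2 * s = E - F) (hc : 2 * c = E + F) (hD0 : s < p * h * c)
    (ha1 : a1 = p * h * c / (p * h * c - s))
    (hb1 : b1 = p / 2 * ((c * (c - 1) + s ^ 2) / ((p * h * c - s) * (1 - c))))
    (hb2 : b2 = p / (2 * (p * h * c - s)))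
    (hc1 : c1 = 1 / 4 * ((F * (1 - c) + s * (F - 1)) / ((p * h * c - s) * (1 - c))))
    (hd1 : d1 = 1 / 4 * ((E * (c - 1) + s * (E - 1)) / ((p * h * c - s) * (1 - c))))
    (e1 : -(b2 * h) * u + a1 * v + (a1 + b1 * h) * w = 0)
    (e2 : b2 * u + b1 * v - b1 * w - b2 * z = 0)
    (e3 : -(b2 * F) / (2 * p) * u + c1 * v + d1 * F * w + b2 / (2 * p) * z = 0)
    (e4 : b2 * E / (2 * p) * u + d1 * v + c1 * E * w - b2 / (2 * p) * z = 0) :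
    u = 0 ∧ v = 0 ∧ w = 0 ∧ z = 0 := by
  have hE0 : (0:ℝ) < E := lt_trans one_pos hE
  have hEne : E ≠ 0 := ne_of_gt hE0
  have hpne : p ≠ 0 := ne_of_gt hp
  have hhne : h ≠ 0 := ne_of_gt hh
  have hE1 : E - 1 ≠ 0 := sub_ne_zero.mpr (ne_of_gt hE)
  have hF : F = E⁻¹ := by field_simp; linarith [hEF]
  subst hF
  have hcE : c = (E ^ 2 + 1) / (2 * E) := by
    field_simp at hc ⊢; linear_combination hc
  have hsE : s = (E ^ 2 - 1) / (2 * E) := by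
    field_simp at hs ⊢; linear_combination hs
  subst hcE hsE
  have hPpos : 0 < p * h * (E ^ 2 + 1) - (E ^ 2 - 1) := by
    have h1 : 0 < (p * h * ((E ^ 2 + 1) / (2 * E)) - (E ^ 2 - 1) / (2 * E)) * (2 * E) :=
      mul_pos (sub_pos.mpr hD0) (by positivity)
    have h2 : (p * h * ((E ^ 2 + 1) / (2 * E)) - (E ^ 2 - 1) / (2 * E)) * (2 * E)
        = p * h * (E ^ 2 + 1) - (E ^ 2 - 1) := by field_simp
    linarith [h2 ▸ h1]
  have hPne : p * h * (E ^ 2 + 1) - (E ^ 2 - 1) ≠ 0 := ne_of_gt hPpos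
  have hGne : 2 * E - (E ^ 2 + 1) ≠ 0 := by
    intro hcc; apply hE1; nlinarith [sq_nonneg (E - 1)]
  subst ha1 hb1 hb2 hc1 hd1
  field_simp at e1 e2 e3 e4
  have hrA : -E * u + (E ^ 2 + 1) * v - E * w = 0 := by
    refine cancel_ne (a := -2 * p * h * (E - 1) ^ 2) ?_ (by linear_combination e1)
    exact mul_ne_zero (mul_ne_zero (mul_ne_zero (by norm_num) hpne) hhne) (pow_ne_zero _ hE1)
  have hrB : E * u - (E ^ 2 + E + 1) * v + (E ^ 2 + E + 1) * w - E * z = 0 := by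
    refine cancel_ne (a := -2 * p * (E - 1) ^ 2) ?_ (by linear_combination e2)
    exact mul_ne_zero (mul_ne_zero (by norm_num) hpne) (pow_ne_zero _ hE1)
  have hrC : -u + (E + 2) * v - (2 * E + 1) * w + E * z = 0 := by
    refine cancel_ne (a := -4 * (E - 1) ^ 2) ?_ (by linear_combination e3)
    exact mul_ne_zero (by norm_num) (pow_ne_zero _ hE1)
  have hrD : E * u - (2 * E + 1) * v + (E + 2) * w - z = 0 := by
    refine cancel_ne (a := -4 * E * (E - 1) ^ 2) ?_ (by linear_combination e4)
    exact mul_ne_zero (mul_ne_zero (by norm_num) hEne) (pow_ne_zero _ hE1)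
  have hS2 : u - (E + 1) * v + E * w = 0 :=
    cancel_ne hE1 (by linear_combination hrB + hrC)
  have hS4 : E * w - v = 0 :=
    cancel_ne hE1 (by linear_combination hrA + E * hS2)
  have hS5 : -v + (E + 1) * w - E * z = 0 := by linear_combination hrB - E * hS2
  have hS3 : v - 2 * w + z = 0 := by
    refine cancel_ne (a := (E - 1) * (E + 1)) ?_ (by linear_combination E * hrC + hrD)
    exact mul_ne_zero hE1 (by positivity)
  have hw' : w - E * z = 0 := by linear_combination hS5 - hS4
  have hz : z = 0 :=
    cancel_ne (pow_ne_zero 2 hE1) (by linear_combination hS3 + hS4 - (E - 2) * hw')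
  have hw : w = 0 := by linear_combination hw' + E * hz
  have hv : v = 0 := by linear_combination E * hw - hS4
  have hu : u = 0 := by linear_combination hS2 + (E + 1) * hv - E * hw
  exact ⟨hu, hv, hw, hz⟩


/-- The exponential B-splines `φ_{−1}, φ_0, …, φ_{N+1}` with knots `x_j = a + jh`,
`h = (b−a)/N`, are linearly independent as functions on `[a,b]`. -/
theorem expBspline_linearIndependent (p : ℝ) (hp : 0 < p) (N : ℕ) (hN : 1 ≤ N)
    (a b : ℝ) (hab : a < b) (h : ℝ) (hh : h = (b - a) / N) (δ : ℤ → ℝ)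
    (hzero : ∀ x ∈ Set.Icc a b,
      (∑ i ∈ Finset.Icc (-1 : ℤ) ((N : ℤ) + 1), δ i * expBspline p h a i x) = 0) :
    ∀ i ∈ Finset.Icc (-1 : ℤ) ((N : ℤ) + 1), δ i = 0 := by
  have hNpos : (0:ℝ) < (N:ℝ) := by exact_mod_cast Nat.pos_of_ne_zero (by omega)
  have hh0 : 0 < h := by rw [hh]; exact div_pos (by linarith) hNpos
  have hb : b = a + (N:ℝ) * h := by rw [hh]; field_simp; ring
  have key : ∀ j : ℤ, 0 ≤ j → j + 1 ≤ (N:ℤ) →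
      δ (j - 1) = 0 ∧ δ j = 0 ∧ δ (j + 1) = 0 ∧ δ (j + 2) = 0 := by
    intro j hj0 hjN
    have hjr : (0:ℝ) ≤ (j:ℝ) := by exact_mod_cast hj0
    have hjr2 : (j:ℝ) + 1 ≤ (N:ℝ) := by exact_mod_cast hjN
    have hlr : (a + (j : ℝ) * h) < (a + ((j : ℝ) + 1) * h) := by nlinarith
    have hsum : ∀ x ∈ Set.Ioo (a + (j : ℝ) * h) (a + ((j : ℝ) + 1) * h),
        δ (j - 1) * expBspline p h a (j - 1) x + δ j * expBspline p h a j x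
        + δ (j + 1) * expBspline p h a (j + 1) x
        + δ (j + 2) * expBspline p h a (j + 2) x = 0 := by
      intro x hx
      obtain ⟨hx1, hx2⟩ := hx
      have hxa : a ≤ x := by nlinarith [mul_nonneg hjr hh0.le]
      have hxb : x ≤ b := by
        rw [hb]; nlinarith [mul_le_mul_of_nonneg_right hjr2 hh0.le]
      have h0 := hzero x ⟨hxa, hxb⟩
      have hsub : Finset.Icc (j - 1) (j + 2) ⊆ Finset.Icc (-1 : ℤ) ((N:ℤ) + 1) := by
        intro k hk; rw [Finset.mem_Icc] at *; omega
      have hvan : ∀ k ∈ Finset.Icc (-1 : ℤ) ((N:ℤ) + 1), k ∉ Finset.Icc (j - 1) (j + 2) →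
          δ k * expBspline p h a k x = 0 := by
        intro k hk hknot
        rw [Finset.mem_Icc] at hk hknot
        push_neg at hknot
        have hval : expBspline p h a k x = 0 := by
          have hcase : k + 2 ≤ j ∨ j + 3 ≤ k := by omega
          rcases hcase with hc | hc
          · refine expBspline_eq_zero hh0 (Or.inr ?_)
            have : ((k:ℝ) + 2) ≤ (j:ℝ) := by exact_mod_cast hc
            nlinarith
          · refine expBspline_eq_zero hh0 (Or.inl ?_)
            have : ((j:ℝ) + 3) ≤ (k:ℝ) := by exact_mod_cast hc
            nlinarith
        rw [hval, mul_zero]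
      rw [← Finset.sum_subset hsub hvan] at h0
      have hIcc : Finset.Icc (j - 1) (j + 2) = {j - 1, j, j + 1, j + 2} := by
        ext k; simp only [Finset.mem_Icc, Finset.mem_insert, Finset.mem_singleton]; omega
      rw [hIcc, Finset.sum_insert (by simp; try omega), Finset.sum_insert (by simp; try omega),
        Finset.sum_insert (by simp; try omega), Finset.sum_singleton] at h0
      linarith [h0]
    have hpt : ∀ x ∈ Set.Ioo (a + (j : ℝ) * h) (a + ((j : ℝ) + 1) * h),
        (δ (j - 1) * ((p / (2 * (p * h * Real.cosh (p * h) - Real.sinh (p * h)))) * (-(a + ((j : ℝ) + 1) * h))) + δ j * ((p * h * Real.cosh (p * h) / (p * h * Real.cosh (p * h) - Real.sinh (p * h))) - (p / 2 * ((Real.cosh (p * h) * (Real.cosh (p * h) - 1) + Real.sinh (p * h) ^ 2) / ((p * h * Real.cosh (p * h) - Real.sinh (p * h)) * (1 - Real.cosh (p * h))))) * (a + (j : ℝ) * h)) + δ (j + 1) * ((p * h * Real.cosh (p * h) / (p * h * Real.cosh (p * h) - Real.sinh (p * h))) + (p / 2 * ((Real.cosh (p * h) * (Real.cosh (p * h)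 - 1) + Real.sinh (p * h) ^ 2) / ((p * h * Real.cosh (p * h) - Real.sinh (p * h)) * (1 - Real.cosh (p * h))))) * (a + ((j : ℝ) + 1) * h)) + δ (j + 2) * ((p / (2 * (p * h * Real.cosh (p * h) - Real.sinh (p * h)))) * (a + (j : ℝ) * h)))
        + (δ (j - 1) * (p / (2 * (p * h * Real.cosh (p * h) - Real.sinh (p * h)))) + δ j * (p / 2 * ((Real.cosh (p * h) * (Real.cosh (p * h) - 1) + Real.sinh (p * h) ^ 2) / ((p * h * Real.cosh (p * h) - Real.sinh (p * h)) * (1 - Real.cosh (p * h))))) - δ (j + 1) * (p / 2 * ((Real.cosh (p * h) * (Real.cosh (p * h) - 1) + Real.sinh (p * h) ^ 2) / ((p * h * Real.cosh (p * h) - Real.sinh (p * h)) * (1 - Real.cosh (p * h))))) - δ (j + 2) * (p / (2 * (p * h * Real.cosh (p * h) - Real.sinh (p * h))))) * x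
        + (-(δ (j - 1) * ((p / (2 * (p * h * Real.cosh (p * h) - Real.sinh (p * h)))) * Real.exp (-(p * (a + (j : ℝ) * h))) * Real.exp (-(p * h)) / (2 * p))) + δ j * ((1 / 4 * ((Real.exp (-(p * h)) * (1 - Real.cosh (p * h)) + Real.sinh (p * h) * (Real.exp (-(p * h)) - 1)) / ((p * h * Real.cosh (p * h) - Real.sinh (p * h)) * (1 - Real.cosh (p * h))))) * Real.exp (-(p * (a + (j : ℝ) * h)))) + δ (j + 1) * ((1 / 4 * ((Real.exp (p * h) * (Real.cosh (p * h) - 1) + Real.sinh (p * h) * (Real.exp (p * h) - 1)) / ((p * h * Real.cosh (p * h) - Real.sinh (p * h)) * (1 - Real.cosh (p * h))))) * Real.exp (-(p * (a + (j : ℝ) * h))) * Real.exp (-(p * h))) + δ (j + 2) * ((p / (2 * (p * h * Real.cosh (p * h) - Real.sinh (p * h)))) * Real.exp (-(p * (a + (j : ℝ) * h))) / (2 * p))) * Real.exp (p * x)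
        + (δ (j - 1) * ((p / (2 * (p * h * Real.cosh (p * h) - Real.sinh (p * h)))) * Real.exp (p * (a + (j : ℝ) * h)) * Real.exp (p * h) / (2 * p)) + δ j * ((1 / 4 * ((Real.exp (p * h) * (Real.cosh (p * h) - 1) + Real.sinh (p * h) * (Real.exp (p * h) - 1)) / ((p * h * Real.cosh (p * h) - Real.sinh (p * h)) * (1 - Real.cosh (p * h))))) * Real.exp (p * (a + (j : ℝ) * h))) + δ (j + 1) * ((1 / 4 * ((Real.exp (-(p * h)) * (1 - Real.cosh (p * h)) + Real.sinh (p * h) * (Real.exp (-(p * h)) - 1)) / ((p * h * Real.cosh (p * h) - Real.sinh (p * h)) * (1 - Real.cosh (p * h))))) * Real.exp (p * (a + (j : ℝ) * h)) * Real.exp (p * h)) - δ (j + 2) * ((p / (2 * (p * h * Real.cosh (p * h) - Real.sinh (p * h)))) * Real.exp (p * (a + (j : ℝ) * h)) / (2 * p))) * Real.exp (-(p * x)) = 0 := by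
      intro x hx
      obtain ⟨hx1, hx2⟩ := hx
      have h1 := expBspline_eval4 (p := p) (x₀ := a) hh0 (i := j - 1) (x := x)
        (by push_cast; linarith) (by push_cast; linarith)
      have h2 := expBspline_eval3 (p := p) (x₀ := a) hh0 (i := j) (x := x)
        (by push_cast; linarith) (by push_cast; linarith)
      have h3 := expBspline_eval2 (p := p) (x₀ := a) hh0 (i := j + 1) (x := x)
        (by push_cast; linarith) (by push_cast; linarith)
      have h4 := expBspline_eval1 (p := p) (h := h) (x₀ := a) (i := j + 2) (x := x)
        (by push_cast; linarith) (by push_cast; linarith)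
      have h0 := hsum x ⟨hx1, hx2⟩
      rw [h1, h2, h3, h4] at h0
      rw [Real.sinh_eq (p * (x - (a + (((j - 1 : ℤ) : ℝ) + 2) * h))),
          Real.sinh_eq (p * (a + (((j + 2 : ℤ) : ℝ) - 2) * h - x))] at h0
      have m1 : Real.exp (p * (x - (a + (((j - 1 : ℤ) : ℝ) + 2) * h)))
          = Real.exp (p * x) * (Real.exp (-(p * (a + (j : ℝ) * h))) * Real.exp (-(p * h))) := by
        rw [← Real.exp_add, ← Real.exp_add]; congr 1; push_cast; ring
      have m2 : Real.exp (-(p * (x - (a + (((j - 1 : ℤ) : ℝ) + 2) * h))))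
          = Real.exp (-(p * x)) * (Real.exp (p * (a + (j : ℝ) * h)) * Real.exp (p * h)) := by
        rw [← Real.exp_add, ← Real.exp_add]; congr 1; push_cast; ring
      have m3 : Real.exp (p * (x - (a + ((j : ℤ) : ℝ) * h)))
          = Real.exp (p * x) * Real.exp (-(p * (a + (j : ℝ) * h))) := by
        rw [← Real.exp_add]; congr 1; push_cast; ring
      have m4 : Real.exp (-(p * (x - (a + ((j : ℤ) : ℝ) * h))))
          = Real.exp (-(p * x)) * Real.exp (p * (a + (j : ℝ) * h)) := by
        rw [← Real.exp_add]; congr 1; push_cast; ring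
      have m5 : Real.exp (p * (a + (((j + 1 : ℤ) : ℝ)) * h - x))
          = Real.exp (-(p * x)) * (Real.exp (p * (a + (j : ℝ) * h)) * Real.exp (p * h)) := by
        rw [← Real.exp_add, ← Real.exp_add]; congr 1; push_cast; ring
      have m6 : Real.exp (-(p * (a + (((j + 1 : ℤ) : ℝ)) * h - x)))
          = Real.exp (p * x) * (Real.exp (-(p * (a + (j : ℝ) * h))) * Real.exp (-(p * h))) := by
        rw [← Real.exp_add, ← Real.exp_add]; congr 1; push_cast; ring
      have m7 : Real.exp (p * (a + (((j + 2 : ℤ) : ℝ) - 2) * h - x))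
          = Real.exp (-(p * x)) * Real.exp (p * (a + (j : ℝ) * h)) := by
        rw [← Real.exp_add]; congr 1; push_cast; ring
      have m8 : Real.exp (-(p * (a + (((j + 2 : ℤ) : ℝ) - 2) * h - x)))
          = Real.exp (p * x) * Real.exp (-(p * (a + (j : ℝ) * h))) := by
        rw [← Real.exp_add]; congr 1; push_cast; ring
      rw [m1, m2, m3, m4, m5, m6, m7, m8] at h0
      push_cast at h0
      linear_combination h0
    obtain ⟨hA, hB, hC, hD⟩ := indep4 (ne_of_gt hp) hlr hpt
    have hEXne : Real.exp (p * (a + (j : ℝ) * h)) ≠ 0 := Real.exp_ne_zero _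
    have hEXmne : Real.exp (-(p * (a + (j : ℝ) * h))) ≠ 0 := Real.exp_ne_zero _
    have e1 : -((p / (2 * (p * h * Real.cosh (p * h) - Real.sinh (p * h)))) * h) * δ (j - 1) + (p * h * Real.cosh (p * h) / (p * h * Real.cosh (p * h) - Real.sinh (p * h))) * δ j
        + ((p * h * Real.cosh (p * h) / (p * h * Real.cosh (p * h) - Real.sinh (p * h))) + (p / 2 * ((Real.cosh (p * h) * (Real.cosh (p * h) - 1) + Real.sinh (p * h) ^ 2) / ((p * h * Real.cosh (p * h) - Real.sinh (p * h)) * (1 - Real.cosh (p * h))))) * h) * δ (j + 1) = 0 := by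
      linear_combination hA + (a + (j : ℝ) * h) * hB
    have e2 : (p / (2 * (p * h * Real.cosh (p * h) - Real.sinh (p * h)))) * δ (j - 1) + (p / 2 * ((Real.cosh (p * h) * (Real.cosh (p * h) - 1) + Real.sinh (p * h) ^ 2) / ((p * h * Real.cosh (p * h) - Real.sinh (p * h)) * (1 - Real.cosh (p * h))))) * δ j - (p / 2 * ((Real.cosh (p * h) * (Real.cosh (p * h) - 1) + Real.sinh (p * h) ^ 2) / ((p * h * Real.cosh (p * h) - Real.sinh (p * h)) * (1 - Real.cosh (p * h))))) * δ (j + 1)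
        - (p / (2 * (p * h * Real.cosh (p * h) - Real.sinh (p * h)))) * δ (j + 2) = 0 := by linear_combination hB
    have e3 : -((p / (2 * (p * h * Real.cosh (p * h) - Real.sinh (p * h)))) * Real.exp (-(p * h))) / (2 * p) * δ (j - 1) + (1 / 4 * ((Real.exp (-(p * h)) * (1 - Real.cosh (p * h)) + Real.sinh (p * h) * (Real.exp (-(p * h)) - 1)) / ((p * h * Real.cosh (p * h) - Real.sinh (p * h)) * (1 - Real.cosh (p * h))))) * δ j
        + (1 / 4 * ((Real.exp (p * h) * (Real.cosh (p * h) - 1) + Real.sinh (p * h) * (Real.exp (p * h) - 1)) / ((p * h * Real.cosh (p * h) - Real.sinh (p * h)) * (1 - Real.cosh (p * h))))) * Real.exp (-(p * h)) * δ (j + 1) + (p / (2 * (p * h * Real.cosh (p * h) - Real.sinh (p * h)))) / (2 * p) * δ (j + 2) = 0 := by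
      refine cancel_ne hEXmne ?_
      linear_combination hC
    have e4 : (p / (2 * (p * h * Real.cosh (p * h) - Real.sinh (p * h)))) * Real.exp (p * h) / (2 * p) * δ (j - 1) + (1 / 4 * ((Real.exp (p * h) * (Real.cosh (p * h) - 1) + Real.sinh (p * h) * (Real.exp (p * h) - 1)) / ((p * h * Real.cosh (p * h) - Real.sinh (p * h)) * (1 - Real.cosh (p * h))))) * δ j
        + (1 / 4 * ((Real.exp (-(p * h)) * (1 - Real.cosh (p * h)) + Real.sinh (p * h) * (Real.exp (-(p * h)) - 1)) / ((p * h * Real.cosh (p * h) - Real.sinh (p * h)) * (1 - Real.cosh (p * h))))) * Real.exp (p * h) * δ (j + 1) - (p / (2 * (p * h * Real.cosh (p * h) - Real.sinh (p * h)))) / (2 * p) * δ (j + 2) = 0 := by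
      refine cancel_ne hEXne ?_
      linear_combination hD
    exact solve4 p h (Real.exp (p * h)) (Real.exp (-(p * h))) (Real.sinh (p * h)) (Real.cosh (p * h)) _ _ _ _ _
      (δ (j - 1)) (δ j) (δ (j + 1)) (δ (j + 2)) hp hh0
      (by rw [show (1:ℝ) = Real.exp 0 by simp]; exact Real.exp_lt_exp.mpr (by positivity))
      (by rw [← Real.exp_add]; simp)
      (by rw [Real.sinh_eq]; ring) (by rw [Real.cosh_eq]; ring)
      (sinh_lt_mul_cosh (by positivity))
      rfl rfl rfl rfl rfl e1 e2 e3 e4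
  intro i hi
  rw [Finset.mem_Icc] at hi
  rcases le_or_gt i 2 with hle | hgt
  · obtain ⟨k1, k2, k3, k4⟩ := key 0 le_rfl (by omega)
    have : i = -1 ∨ i = 0 ∨ i = 1 ∨ i = 2 := by omega
    rcases this with rfl | rfl | rfl | rfl
    · simpa using k1
    · simpa using k2
    · simpa using k3
    · simpa using k4
  · have h4 := (key (i - 2) (by omega) (by omega)).2.2.2
    rwa [show i - 2 + 2 = i by omega] at h4
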